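/- Let R_n be the kernel of the mod-n winding number map on F_{s-1}, with the ℤ/nℤ = ⟨σ⟩ action on R_n/R_n' given by conjugation by x_1. Then the subgroup of σ-invariant elements of R_n/R_n' is generated by the classes of x_i^n for 1 ≤ i ≤ s-1. -/

import Mathlib

open Multiplicative SemidirectProduct

namespace Stmt12

/-- Shift automorphism of `ZMod n → ℤ` (multiplicatively). -/
def shiftE (n : ℕ) (a : ZMod n) : Multiplicative (ZMod n → ℤ) ≃* Multiplicative (ZMod n → ℤ) :=
  AddEquiv.toMultiplicative
  { toFun := fun f k => f (k - a)
    invFun := fun f k => f (k + a)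
    left_inv := fun f => funext fun k => by simp
    right_inv := fun f => funext fun k => by simp
    map_add' := fun f g => rfl }

lemma shiftE_apply (n : ℕ) (a : ZMod n) (x : Multiplicative (ZMod n → ℤ)) (k : ZMod n) :
    toAdd (shiftE n a x) k = toAdd x (k - a) := rfl

def shiftHom (n : ℕ) : Multiplicative (ZMod n) →* MulAut (Multiplicative (ZMod n → ℤ)) where
  toFun a := shiftE n a.toAdd
  map_one' := by
    apply MulEquiv.ext; intro x; apply funext; intro k
    show x (k - toAdd (1 : Multiplicative (ZMod n))) = x k
    simp
  map_mul' a b := by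
    apply MulEquiv.ext; intro x; apply funext; intro k
    show x (k - toAdd (a * b)) = x (k - toAdd a - toAdd b)
    rw [toAdd_mul, sub_sub]

abbrev Wn (n : ℕ) := SemidirectProduct (Multiplicative (ZMod n → ℤ))
  (Multiplicative (ZMod n)) (shiftHom n)

def Phi (s n : ℕ) (i : Fin (s-1)) : FreeGroup (Fin (s-1)) →* Wn n :=
  FreeGroup.lift fun j =>
    ⟨ofAdd (if j = i then Pi.single (0 : ZMod n) (1:ℤ) else 0), ofAdd 1⟩

lemma Phi_of (s n : ℕ) (i j : Fin (s-1)) :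
    Phi s n i (FreeGroup.of j) =
      ⟨ofAdd (if j = i then Pi.single (0 : ZMod n) (1:ℤ) else 0), ofAdd 1⟩ :=
  FreeGroup.lift_apply_of

lemma Phi_of_ne (s n : ℕ) (i j : Fin (s-1)) (h : ¬ (j = i)) :
    Phi s n i (FreeGroup.of j) = inr (ofAdd 1) := by
  rw [Phi_of, if_neg h]
  rfl

lemma Phi_zpow (s n : ℕ) (i j : Fin (s-1)) (h : ¬ (j = i)) (a : ℤ) :
    Phi s n i (FreeGroup.of j ^ a) = inr (ofAdd (a : ZMod n)) := by
  rw [map_zpow, Phi_of_ne s n i j h, ← map_zpow]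
  congr 1
  rw [← ofAdd_zsmul]
  congr 1
  simp


lemma shiftHom_apply (n : ℕ) (a : ZMod n) (x : Multiplicative (ZMod n → ℤ)) (k : ZMod n) :
    toAdd (shiftHom n (ofAdd a) x) k = toAdd x (k - a) := rfl

section Theta

variable (s n : ℕ) (αn : FreeGroup (Fin (s-1)) →* Multiplicative (ZMod n))
  (i : Fin (s-1)) (hr : ∀ w, (Phi s n i w).right = αn w)

/-- The counting homomorphism on the kernel. -/
def theta : αn.ker →* Multiplicative (ZMod n → ℤ) where
  toFun h := (Phi s n i h.1).left
  map_one' := by simp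
  map_mul' h₁ h₂ := by
    have h1 : (Phi s n i h₁.1).right = 1 := by
      rw [hr]; exact h₁.2
    show (Phi s n i (↑(h₁ * h₂))).left = _
    rw [Subgroup.coe_mul, map_mul, mul_left, h1, map_one, MulAut.one_apply]

lemma theta_apply (h : αn.ker) : theta s n αn i hr h = (Phi s n i h.1).left := rfl

def thetaAb : Abelianization αn.ker →* Multiplicative (ZMod n → ℤ) :=
  Abelianization.lift (theta s n αn i hr)

lemma thetaAb_of (h : αn.ker) :
    thetaAb s n αn i hr (Abelianization.of h) = (Phi s n i h.1).left := rfl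

end Theta

section Values

variable (s n : ℕ) (i i0 j : Fin (s-1))

/-- left component of `Phi i` on the generator `x₀^a x_j x₀^{-(a+1)}`. -/
lemma Phi_gen_left (hi0 : ¬ (i0 = i)) (a : ℤ) :
    (Phi s n i (FreeGroup.of i0 ^ a * FreeGroup.of j * FreeGroup.of i0 ^ (-(a+1)))).left =
      ofAdd (if j = i then Pi.single ((a : ZMod n)) (1:ℤ) else 0) := by
  rw [map_mul, map_mul, Phi_zpow s n i i0 hi0, Phi_zpow s n i i0 hi0, Phi_of]
  rw [mul_left, mul_left]
  simp only [left_inr, map_one, mul_one, one_mul, right_inr]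
  by_cases h : j = i
  · rw [if_pos h, if_pos h]
    apply Multiplicative.toAdd.injective
    apply funext; intro k
    rw [shiftHom_apply, toAdd_ofAdd, toAdd_ofAdd, Pi.single_apply, Pi.single_apply,
      ]
    simp [sub_eq_zero]
  · rw [if_neg h, if_neg h, ofAdd_zero, map_one]

lemma Phi_x0_pow_left (hi0 : ¬ (i0 = i)) (a : ℤ) :
    (Phi s n i (FreeGroup.of i0 ^ a)).left = 1 := by
  rw [Phi_zpow s n i i0 hi0, left_inr]

end Values


section Gen

variable (s n : ℕ)

/-- ℤ-indexed Schreier-type generators of the kernel. -/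
def Sgen (i0 : Fin (s-1)) : Set (FreeGroup (Fin (s-1))) :=
  (Set.range fun p : Fin (s-1) × ℤ =>
    FreeGroup.of i0 ^ p.2 * FreeGroup.of p.1 * FreeGroup.of i0 ^ (-(p.2+1))) ∪
  {FreeGroup.of i0 ^ (n:ℤ)}

/-- total winding number. -/
def Ew : FreeGroup (Fin (s-1)) →* Multiplicative ℤ :=
  FreeGroup.lift fun _ => ofAdd (1:ℤ)

lemma gen_key (i0 : Fin (s-1)) (w : FreeGroup (Fin (s-1))) (b : ℤ) :
    FreeGroup.of i0 ^ b * w * FreeGroup.of i0 ^ (-(b + (Ew s w).toAdd)) ∈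
      Subgroup.closure (Sgen s n i0) := by
  induction w using FreeGroup.induction_on generalizing b with
  | C1 =>
    have h1 : FreeGroup.of i0 ^ b * 1 * FreeGroup.of i0 ^ (-(b + (Ew s (1:FreeGroup (Fin (s-1)))).toAdd)) = 1 := by
      simp only [map_one, toAdd_one, add_zero, mul_one]
      group
    rw [h1]; exact one_mem _
  | of x =>
    show FreeGroup.of i0 ^ b * FreeGroup.of x *
      FreeGroup.of i0 ^ (-(b + (Ew s (FreeGroup.of x)).toAdd)) ∈ _
    have h1 : (Ew s (FreeGroup.of x)).toAdd = 1 := by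
      simp [Ew, FreeGroup.lift_apply_of]
    rw [h1]
    exact Subgroup.subset_closure (Or.inl ⟨(x, b), rfl⟩)
  | inv_of x ih =>
    show FreeGroup.of i0 ^ b * (FreeGroup.of x)⁻¹ *
      FreeGroup.of i0 ^ (-(b + (Ew s (FreeGroup.of x)⁻¹).toAdd)) ∈ _
    have h1 : (Ew s (FreeGroup.of x)⁻¹).toAdd = -1 := by
      simp [Ew, FreeGroup.lift_apply_of]
    have h2 : (Ew s (FreeGroup.of x)).toAdd = 1 := by
      simp [Ew, FreeGroup.lift_apply_of]
    have ih' := ih (b - 1)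
    rw [show ((Ew s) (FreeGroup.of x) : Multiplicative ℤ).toAdd = 1 from h2] at ih'
    have h3 : FreeGroup.of i0 ^ b * (FreeGroup.of x)⁻¹ *
        FreeGroup.of i0 ^ (-(b + (Ew s (FreeGroup.of x)⁻¹).toAdd)) =
        (FreeGroup.of i0 ^ (b-1) * FreeGroup.of x * FreeGroup.of i0 ^ (-(b-1+1)))⁻¹ := by
      rw [h1]; group
    rw [h3]
    exact inv_mem ih'
  | mul x y ihx ihy =>
    have h3 : FreeGroup.of i0 ^ b * (x * y) *
        FreeGroup.of i0 ^ (-(b + (Ew s (x*y)).toAdd)) =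
        (FreeGroup.of i0 ^ b * x * FreeGroup.of i0 ^ (-(b + (Ew s x).toAdd))) *
        (FreeGroup.of i0 ^ (b + (Ew s x).toAdd) * y *
          FreeGroup.of i0 ^ (-(b + (Ew s x).toAdd + (Ew s y).toAdd))) := by
      rw [map_mul, toAdd_mul]; group
    rw [h3]
    exact mul_mem (ihx b) (ihy (b + (Ew s x).toAdd))

variable (αn : FreeGroup (Fin (s-1)) →* Multiplicative (ZMod n))
  (hα : ∀ i, αn (FreeGroup.of i) = Multiplicative.ofAdd 1)

include hα

lemma alpha_gen (i0 j : Fin (s-1)) (b : ℤ) :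
    αn (FreeGroup.of i0 ^ b * FreeGroup.of j * FreeGroup.of i0 ^ (-(b+1))) = 1 := by
  rw [map_mul, map_mul, map_zpow, map_zpow, hα, hα]
  apply Multiplicative.toAdd.injective
  simp only [toAdd_mul, toAdd_zpow, toAdd_ofAdd, toAdd_one, smul_eq_mul, zsmul_eq_mul, mul_one]
  push_cast
  ring

lemma alpha_z : αn (FreeGroup.of i0 ^ (n:ℤ)) = 1 := by
  rw [map_zpow, hα]
  apply Multiplicative.toAdd.injective
  simp [ZMod.natCast_self]

lemma ker_eq_closure (hn : 1 ≤ n) (i0 : Fin (s-1)) :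
    αn.ker = Subgroup.closure (Sgen s n i0) := by
  haveI : NeZero n := ⟨by omega⟩
  apply le_antisymm
  · intro w hw
    have hαE : αn = (AddMonoidHom.toMultiplicative (Int.castAddHom (ZMod n))).comp (Ew s) := by
      apply FreeGroup.ext_hom
      intro a
      rw [hα]
      simp [Ew, FreeGroup.lift_apply_of]
    have hw' : ((Ew s w).toAdd : ZMod n) = 0 := by
      have := (MonoidHom.mem_ker).mp hw
      rw [hαE] at this
      have := congrArg Multiplicative.toAdd this
      simpa using this
    obtain ⟨q, hq⟩ := (ZMod.intCast_zmod_eq_zero_iff_dvd _ n).mp hw'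
    have h1 : w = (FreeGroup.of i0 ^ (0:ℤ) * w *
        FreeGroup.of i0 ^ (-(0 + (Ew s w).toAdd))) * (FreeGroup.of i0 ^ (n:ℤ)) ^ q := by
      rw [← zpow_mul, ← hq]; group
    rw [h1]
    refine mul_mem (gen_key s n i0 w 0) (zpow_mem ?_ q)
    exact Subgroup.subset_closure (Or.inr rfl)
  · rw [Subgroup.closure_le]
    rintro g (⟨⟨j, b⟩, rfl⟩ | rfl)
    · exact (MonoidHom.mem_ker).mpr (alpha_gen s n αn hα i0 j b)
    · exact (MonoidHom.mem_ker).mpr (alpha_z s n αn hα)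

end Gen


lemma left_conj_inr (n : ℕ) (r : Multiplicative (ZMod n)) (X : Wn n) :
    (inr r * X * (inr r)⁻¹).left = shiftHom n r X.left := by
  rw [← map_inv]
  simp [mul_left, left_inr, right_inr]

lemma of_coe_eq {G : Type*} [Group G] {P : Subgroup G} (h h' : P) (e : (h:G) = (h':G)) :
    Abelianization.of h = Abelianization.of h' := by rw [Subtype.ext e]

end Stmt12

open Stmt12 Multiplicative SemidirectProduct in
/-- Let `R_n` be the kernel of the mod-n winding number map on `F_{s-1}`, with
the `ℤ/nℤ = ⟨σ⟩` action on `R_n/R_n'` induced by conjugation by `x₁` (the induced map `τ` on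
the abelianization).  Then the subgroup of `σ`-invariant elements of `R_n/R_n'` is exactly the
subgroup generated by the classes of `x_i^n`, `1 ≤ i ≤ s-1`. -/
theorem stmt_12 (s n : ℕ) (hs : 3 ≤ s) (hn : 1 ≤ n)
    (αn : FreeGroup (Fin (s-1)) →* Multiplicative (ZMod n))
    (hα : ∀ i, αn (FreeGroup.of i) = Multiplicative.ofAdd 1)
    (τ : Abelianization αn.ker →* Abelianization αn.ker)
    (hτ : ∀ a : αn.ker, τ (Abelianization.of a) =
      Abelianization.of (⟨FreeGroup.of (⟨0, by omega⟩ : Fin (s-1)) * ↑a *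
          (FreeGroup.of (⟨0, by omega⟩ : Fin (s-1)))⁻¹,
        (MonoidHom.normal_ker αn).conj_mem ↑a a.2 _⟩ : αn.ker))
    (ξ : Fin (s-1) → αn.ker)
    (hξ : ∀ i, (ξ i : FreeGroup (Fin (s-1))) = FreeGroup.of i ^ n) :
    ∀ m : Abelianization αn.ker,
      τ m = m ↔ m ∈ Subgroup.closure (Set.range fun i => Abelianization.of (ξ i)) := by
  intro m
  haveI : NeZero n := ⟨by omega⟩
  set i0 : Fin (s-1) := ⟨0, by omega⟩ with hi0def
  set K := Subgroup.closure (Set.range fun i => Abelianization.of (ξ i)) with hK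
  -- membership facts
  have hgmem : ∀ (j : Fin (s-1)) (b : ℤ),
      FreeGroup.of i0 ^ b * FreeGroup.of j * FreeGroup.of i0 ^ (-(b+1)) ∈ αn.ker :=
    fun j b => MonoidHom.mem_ker.mpr (alpha_gen s n αn hα i0 j b)
  have hzmem : FreeGroup.of i0 ^ (n:ℤ) ∈ αn.ker :=
    MonoidHom.mem_ker.mpr (alpha_z s n αn hα)
  set ζ : αn.ker := ⟨FreeGroup.of i0 ^ (n:ℤ), hzmem⟩ with hζ
  have hζξ : ζ = ξ i0 := Subtype.ext (by
    show FreeGroup.of i0 ^ (n:ℤ) = ((ξ i0 : αn.ker) : FreeGroup (Fin (s-1)))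
    rw [hξ i0, zpow_natCast])
  set gH : Fin (s-1) → ℤ → αn.ker := fun j b => ⟨_, hgmem j b⟩ with hgH
  set A : Fin (s-1) → ℤ → Abelianization αn.ker :=
    fun j b => Abelianization.of (gH j b) with hA
  set zc : Abelianization αn.ker := Abelianization.of ζ with hzc
  have hzcK : zc ∈ K := by
    rw [hzc, hζξ]; exact Subgroup.subset_closure ⟨i0, rfl⟩
  have hξK : ∀ j, Abelianization.of (ξ j) ∈ K := fun j => Subgroup.subset_closure ⟨j, rfl⟩
  -- the `ab = ba` trick: each of (ξ j) is τ-invariant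
  have hτξ : ∀ j, τ (Abelianization.of (ξ j)) = Abelianization.of (ξ j) := by
    intro j
    have hamem : (FreeGroup.of i0 * FreeGroup.of j ^ ((n:ℤ)-1)) ∈ αn.ker := by
      apply MonoidHom.mem_ker.mpr
      rw [map_mul, map_zpow, hα, hα]
      apply Multiplicative.toAdd.injective
      simp only [toAdd_mul, toAdd_zpow, toAdd_ofAdd, toAdd_one, zsmul_eq_mul, mul_one]
      push_cast
      rw [ZMod.natCast_self]
      ring
    have hbmem : (FreeGroup.of j * (FreeGroup.of i0)⁻¹) ∈ αn.ker := by
      apply MonoidHom.mem_ker.mpr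
      rw [map_mul, map_inv, hα, hα]
      simp
    rw [hτ (ξ j)]
    refine (of_coe_eq _ ((⟨_, hamem⟩ : αn.ker) * ⟨_, hbmem⟩) ?_).trans ?_
    · show FreeGroup.of i0 * ↑(ξ j) * (FreeGroup.of i0)⁻¹ =
        (FreeGroup.of i0 * FreeGroup.of j ^ ((n:ℤ)-1)) * (FreeGroup.of j * (FreeGroup.of i0)⁻¹)
      rw [hξ j, ← zpow_natCast (FreeGroup.of j) n]
      group
    · rw [map_mul, mul_comm, ← map_mul]
      refine of_coe_eq _ _ ?_
      show (FreeGroup.of j * (FreeGroup.of i0)⁻¹) * (FreeGroup.of i0 * FreeGroup.of j ^ ((n:ℤ)-1)) =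
        ((ξ j : αn.ker) : FreeGroup (Fin (s-1)))
      rw [hξ j, ← zpow_natCast (FreeGroup.of j) n]
      group
  constructor
  · -- hard direction
    intro hm
    -- the homomorphisms θ i
    have hrt : ∀ i : Fin (s-1), ∀ w, (Phi s n i w).right = αn w := by
      intro i
      have h1 : rightHom.comp (Phi s n i) = αn := by
        apply FreeGroup.ext_hom
        intro a
        rw [MonoidHom.comp_apply, Phi_of, hα]
        rfl
      exact fun w => DFunLike.congr_fun h1 w
    set θ : (i : Fin (s-1)) → Abelianization αn.ker →* Multiplicative (ZMod n → ℤ) :=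
      fun i => thetaAb s n αn i (hrt i) with hθ
    have hθA : ∀ (i : Fin (s-1)), ¬ (i0 = i) → ∀ (j : Fin (s-1)) (b : ℤ),
        θ i (A j b) = ofAdd (if j = i then Pi.single ((b : ZMod n)) (1:ℤ) else 0) := by
      intro i hi j b
      rw [hθ, hA, thetaAb_of]
      exact Phi_gen_left s n i i0 j hi b
    have hθz : ∀ (i : Fin (s-1)), ¬ (i0 = i) → θ i zc = 1 := by
      intro i hi
      rw [hθ, hzc, thetaAb_of]
      exact Phi_x0_pow_left s n i i0 hi (n:ℤ)
    -- τ shifts θ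
    have hθτ : ∀ (i : Fin (s-1)), ¬ (i0 = i) → ∀ m',
        θ i (τ m') = shiftHom n (ofAdd 1) (θ i m') := by
      intro i hi
      have hhom : (θ i).comp τ = (shiftHom n (ofAdd 1)).toMonoidHom.comp (θ i) := by
        apply Abelianization.hom_ext
        apply MonoidHom.ext
        intro a
        show θ i (τ (Abelianization.of a)) = shiftHom n (ofAdd 1) (θ i (Abelianization.of a))
        rw [hτ a]
        show (Phi s n i (FreeGroup.of i0 * ↑a * (FreeGroup.of i0)⁻¹)).left =
          shiftHom n (ofAdd 1) ((Phi s n i (↑a)).left)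
        rw [map_mul, map_mul, map_inv, Phi_of_ne s n i i0 hi]
        exact left_conj_inr n (ofAdd 1) (Phi s n i ↑a)
      exact fun m' => DFunLike.congr_fun hhom m'
    -- generation
    have hT : m ∈ Subgroup.closure
        ((Set.range fun p : Fin (s-1) × Fin n => A p.1 ((p.2 : ℕ) : ℤ)) ∪ {zc}) := by
      have hAshift : ∀ (j : Fin (s-1)) (b q : ℤ), A j (b + n * q) = A j b := by
        intro j b q
        have hcoe : ((ζ^q * gH j b * (ζ^q)⁻¹ : αn.ker) : FreeGroup (Fin (s-1))) =
            (FreeGroup.of i0 ^ (n:ℤ))^q *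
            (FreeGroup.of i0 ^ b * FreeGroup.of j * FreeGroup.of i0 ^ (-(b+1))) *
            ((FreeGroup.of i0 ^ (n:ℤ))^q)⁻¹ := by
          push_cast
          rfl
        have hg : gH j (b + n*q) = ζ^q * gH j b * (ζ^q)⁻¹ := Subtype.ext (by
          rw [hcoe]
          show FreeGroup.of i0 ^ (b + n*q) * FreeGroup.of j *
            FreeGroup.of i0 ^ (-(b + n*q + 1)) = _
          group)
        show Abelianization.of (gH j (b + n*q)) = Abelianization.of (gH j b)
        rw [hg, map_mul, map_mul, map_inv, mul_inv_cancel_comm]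
      have hSH : Subgroup.closure
          {h : αn.ker | (h : FreeGroup (Fin (s-1))) ∈ Sgen s n i0} = ⊤ := by
        rw [eq_top_iff]
        rintro h -
        have h2 : (h : FreeGroup (Fin (s-1))) ∈ Subgroup.closure (Sgen s n i0) := by
          rw [← ker_eq_closure s n αn hα hn i0]; exact h.2
        refine Subgroup.closure_induction (k := Sgen s n i0)
          (p := fun g _ => ∀ (hm' : g ∈ αn.ker), (⟨g, hm'⟩ : αn.ker) ∈
            Subgroup.closure {h : αn.ker | (h : FreeGroup (Fin (s-1))) ∈ Sgen s n i0})
          ?_ ?_ ?_ ?_ h2 h.2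
        · intro x hx hm'; exact Subgroup.subset_closure hx
        · intro hm'
          have e1 : (⟨1, hm'⟩ : αn.ker) = 1 := Subtype.ext rfl
          rw [e1]; exact one_mem _
        · intro x y hx hy px py hm'
          have hxk : x ∈ αn.ker := by rw [ker_eq_closure s n αn hα hn i0]; exact hx
          have hyk : y ∈ αn.ker := by rw [ker_eq_closure s n αn hα hn i0]; exact hy
          have e1 : (⟨x*y, hm'⟩ : αn.ker) = ⟨x, hxk⟩ * ⟨y, hyk⟩ := Subtype.ext rfl
          rw [e1]; exact mul_mem (px hxk) (py hyk)
        · intro x hx px hm'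
          have hxk : x ∈ αn.ker := by rw [ker_eq_closure s n αn hα hn i0]; exact hx
          have e1 : (⟨x⁻¹, hm'⟩ : αn.ker) = (⟨x, hxk⟩)⁻¹ := Subtype.ext rfl
          rw [e1]; exact inv_mem (px hxk)
      have hsurj : Function.Surjective (Abelianization.of (G := αn.ker)) :=
        fun x => Quotient.inductionOn' x fun a => ⟨a, rfl⟩
      have h3 : Subgroup.closure
          (Abelianization.of '' {h : αn.ker | (h : FreeGroup (Fin (s-1))) ∈ Sgen s n i0}) = ⊤ := by
        rw [← MonoidHom.map_closure, hSH, Subgroup.map_top_of_surjective _ hsurj]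
      have h4 : Abelianization.of '' {h : αn.ker | (h : FreeGroup (Fin (s-1))) ∈ Sgen s n i0} ⊆
          ↑(Subgroup.closure
            ((Set.range fun p : Fin (s-1) × Fin n => A p.1 ((p.2 : ℕ) : ℤ)) ∪ {zc})) := by
        rintro _ ⟨h, hh, rfl⟩
        rcases hh with ⟨⟨j, b⟩, hb⟩ | hb
        · have hh' : h = gH j b := Subtype.ext hb.symm
          rw [hh']
          have hb0 : 0 ≤ b % (n:ℤ) := Int.emod_nonneg b (by omega)
          have hbn : b % (n:ℤ) < n := Int.emod_lt_of_pos b (by omega)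
          have hlt : (b % (n:ℤ)).toNat < n := by omega
          have e2 : (((⟨(b % (n:ℤ)).toNat, hlt⟩ : Fin n) : ℕ) : ℤ) = b % (n:ℤ) := by
            simp only []
            omega
          have e3 : A j b = A j (((⟨(b % (n:ℤ)).toNat, hlt⟩ : Fin n) : ℕ) : ℤ) := by
            rw [e2]
            conv_lhs => rw [show b = b % (n:ℤ) + n * (b / n) from by rw [Int.emod_add_mul_ediv]]
            exact hAshift j (b % n) (b / n)
          rw [show Abelianization.of (gH j b) = A j b from rfl, e3]
          exact Subgroup.subset_closure (Or.inl ⟨(j, ⟨(b % (n:ℤ)).toNat, hlt⟩), rfl⟩)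
        · have hh' : h = ζ := Subtype.ext hb
          rw [hh']
          exact Subgroup.subset_closure (Or.inr rfl)
      exact (Subgroup.closure_le _).mpr h4 (h3.symm ▸ Subgroup.mem_top m)
    -- coefficient representation
    obtain ⟨c, d, hcd⟩ : ∃ (c : Fin (s-1) × Fin n → ℤ) (d : ℤ),
        m = zc ^ d * ∏ p : Fin (s-1) × Fin n, A p.1 ((p.2 : ℕ) : ℤ) ^ c p := by
      refine Subgroup.closure_induction
        (p := fun m' _ => ∃ (c : Fin (s-1) × Fin n → ℤ) (d : ℤ),
          m' = zc ^ d * ∏ p : Fin (s-1) × Fin n, A p.1 ((p.2 : ℕ) : ℤ) ^ c p)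
        ?_ ?_ ?_ ?_ hT
      · rintro x (⟨p₀, rfl⟩ | rfl)
        · refine ⟨Pi.single p₀ 1, 0, ?_⟩
          rw [zpow_zero, one_mul, Finset.prod_eq_single p₀ ?_ ?_]
          · rw [Pi.single_eq_same, zpow_one]
          · intro p _ hp; rw [Pi.single_eq_of_ne hp, zpow_zero]
          · intro habs; exact absurd (Finset.mem_univ p₀) habs
        · exact ⟨0, 1, by simp⟩
      · exact ⟨0, 0, by simp⟩
      · rintro x y _ _ ⟨c₁, d₁, rfl⟩ ⟨c₂, d₂, rfl⟩
        refine ⟨c₁ + c₂, d₁ + d₂, ?_⟩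
        rw [zpow_add]
        rw [show (∏ p : Fin (s-1) × Fin n, A p.1 ((p.2:ℕ):ℤ) ^ (c₁ + c₂) p) =
            (∏ p : Fin (s-1) × Fin n, A p.1 ((p.2:ℕ):ℤ) ^ c₁ p) *
            (∏ p : Fin (s-1) × Fin n, A p.1 ((p.2:ℕ):ℤ) ^ c₂ p) from by
          rw [← Finset.prod_mul_distrib]
          exact Finset.prod_congr rfl fun p _ => by rw [Pi.add_apply, zpow_add]]
        exact mul_mul_mul_comm _ _ _ _
      · rintro x _ ⟨c₁, d₁, rfl⟩
        refine ⟨-c₁, -d₁, ?_⟩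
        have e1 : ∀ p : Fin (s-1) × Fin n, A p.1 ((p.2:ℕ):ℤ) ^ (-c₁) p =
            (A p.1 ((p.2:ℕ):ℤ) ^ c₁ p)⁻¹ := fun p => by rw [Pi.neg_apply, zpow_neg]
        rw [mul_inv, ← zpow_neg, Finset.prod_congr rfl (fun p _ => e1 p),
          Finset.prod_inv_distrib]
    -- coefficients are constant along each row
    have hconst : ∀ (i : Fin (s-1)), ¬ (i0 = i) → ∀ k k' : Fin n, c (i, k) = c (i, k') := by
      intro i hi k k'
      have hcastinj : ∀ k1 k2 : Fin n, (((k1:ℕ)):ZMod n) = (((k2:ℕ)):ZMod n) → k1 = k2 := by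
        intro k1 k2 h
        apply Fin.ext
        have h5 := congrArg ZMod.val h
        rwa [ZMod.val_cast_of_lt k1.2, ZMod.val_cast_of_lt k2.2] at h5
      have hval : ∀ k0 : Fin n, (θ i m).toAdd (((k0:ℕ)) : ZMod n) = c (i, k0) := by
        intro k0
        have e1 : θ i m = ofAdd (∑ p : Fin (s-1) × Fin n,
            c p • (if p.1 = i then Pi.single ((((p.2:ℕ):ℤ)) : ZMod n) (1:ℤ) else 0)) := by
          rw [hcd, map_mul, map_zpow, hθz i hi, one_zpow, one_mul, map_prod]
          rw [Finset.prod_congr rfl (fun p _ => by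
            rw [map_zpow, hθA i hi p.1 ((p.2:ℕ):ℤ), ← ofAdd_zsmul])]
          rw [← ofAdd_sum]
        rw [e1, toAdd_ofAdd, Finset.sum_apply]
        rw [Finset.sum_eq_single (i, k0) ?_ ?_]
        · rw [Pi.smul_apply, if_pos rfl, Pi.single_apply]
          simp
        · rintro ⟨j1, k1⟩ _ hp
          rw [Pi.smul_apply]
          by_cases hj : j1 = i
          · subst hj
            have hk : k1 ≠ k0 := fun h => hp (by rw [h])
            rw [if_pos rfl, Pi.single_apply,
              if_neg (fun h => hk (hcastinj k1 k0 (by exact_mod_cast h.symm))), smul_zero]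
          · rw [if_neg hj]
            simp
        · intro habs; exact absurd (Finset.mem_univ (i, k0)) habs
      have hfix : θ i m = shiftHom n (ofAdd 1) (θ i m) := by
        conv_lhs => rw [← hm]
        exact hθτ i hi m
      have hsh : ∀ κ : ZMod n, (θ i m).toAdd κ = (θ i m).toAdd (κ - 1) := fun κ => by
        conv_lhs => rw [hfix]
        exact shiftHom_apply n 1 (θ i m) κ
      have hnat : ∀ a : ℕ, (θ i m).toAdd ((a : ZMod n)) = (θ i m).toAdd 0 := by
        intro a
        induction a with
        | zero => norm_num
        | succ a ih =>
          have e4 : ((((a:ℕ)+1) : ℕ) : ZMod n) - 1 = ((a:ℕ) : ZMod n) := by push_cast; ring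
          rw [hsh ((((a:ℕ)+1) : ℕ) : ZMod n), e4, ih]
      rw [← hval k, ← hval k', hnat (k:ℕ), hnat (k':ℕ)]
    -- telescoping product
    have htel : ∀ j : Fin (s-1),
        ∏ k : Fin n, A j ((k : ℕ) : ℤ) = Abelianization.of (ξ j) * zc⁻¹ := by
      intro j
      have hmemN : ∀ N : ℕ, FreeGroup.of j ^ (N:ℤ) * FreeGroup.of i0 ^ (-(N:ℤ)) ∈ αn.ker := by
        intro N
        apply MonoidHom.mem_ker.mpr
        rw [map_mul, map_zpow, map_zpow, hα, hα]
        apply Multiplicative.toAdd.injective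
        simp only [toAdd_mul, toAdd_zpow, toAdd_ofAdd, toAdd_one, zsmul_eq_mul, mul_one]
        push_cast
        ring
      have key : ∀ N : ℕ, ∏ k ∈ Finset.range N, A j (k:ℤ) =
          Abelianization.of (⟨_, hmemN N⟩ : αn.ker) := by
        intro N
        induction N with
        | zero =>
          rw [Finset.prod_range_zero,
            show ((⟨_, hmemN 0⟩ : αn.ker) : αn.ker) = 1 from Subtype.ext (by
              show FreeGroup.of j ^ ((0:ℕ):ℤ) * FreeGroup.of i0 ^ (-((0:ℕ):ℤ)) = 1
              push_cast
              group), map_one]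
        | succ N ih =>
          rw [Finset.prod_range_succ, ih, ← map_mul]
          refine of_coe_eq _ _ ?_
          show (FreeGroup.of j ^ (N:ℤ) * FreeGroup.of i0 ^ (-(N:ℤ))) *
              (FreeGroup.of i0 ^ ((N:ℕ):ℤ) * FreeGroup.of j * FreeGroup.of i0 ^ (-(((N:ℕ):ℤ)+1))) =
            FreeGroup.of j ^ (((N+1:ℕ)):ℤ) * FreeGroup.of i0 ^ (-(((N+1:ℕ)):ℤ))
          push_cast
          group
      rw [← Finset.prod_range (fun k : ℕ => A j (k:ℤ)), key n,
        show Abelianization.of (ξ j) * zc⁻¹ = Abelianization.of (ξ j * ζ⁻¹) from by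
          rw [map_mul, map_inv]]
      refine of_coe_eq _ _ ?_
      show FreeGroup.of j ^ ((n:ℕ):ℤ) * FreeGroup.of i0 ^ (-((n:ℕ):ℤ)) =
        ((ξ j * ζ⁻¹ : αn.ker) : FreeGroup (Fin (s-1)))
      push_cast [hξ j]
      change _ = _ * (FreeGroup.of i0 ^ (n:ℤ))⁻¹
      group
    -- row at i0 is trivial
    have hA0 : ∀ b : ℤ, A i0 b = 1 := by
      intro b
      have h1 : gH i0 b = 1 := Subtype.ext (by
        show FreeGroup.of i0 ^ b * FreeGroup.of i0 * FreeGroup.of i0 ^ (-(b+1)) = 1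
        group)
      show Abelianization.of (gH i0 b) = 1
      rw [h1, map_one]
    -- assemble
    rw [hcd, Fintype.prod_prod_type]
    refine mul_mem (zpow_mem hzcK d) (prod_mem ?_)
    intro j _
    by_cases hj : i0 = j
    · have : ∀ k : Fin n, A j ((k:ℕ):ℤ) ^ c (j, k) = 1 := by
        intro k; rw [← hj, hA0, one_zpow]
      rw [Finset.prod_congr rfl (fun k _ => this k), Finset.prod_const_one]
      exact one_mem _
    · have h1 : ∀ k : Fin n, A j ((k:ℕ):ℤ) ^ c (j, k) = A j ((k:ℕ):ℤ) ^ c (j, ⟨0, hn⟩) :=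
        fun k => by rw [hconst j hj k ⟨0, hn⟩]
      rw [Finset.prod_congr rfl (fun k _ => h1 k)]
      have h2 : ∏ k : Fin n, A j ((k:ℕ):ℤ) ^ c (j, ⟨0, hn⟩) =
          (∏ k : Fin n, A j ((k:ℕ):ℤ)) ^ c (j, ⟨0, hn⟩) := by
        rw [Finset.prod_zpow]
      rw [h2, htel j]
      exact zpow_mem (mul_mem (hξK j) (inv_mem hzcK)) _
  · -- easy direction
    intro hmK
    rw [hK] at hmK
    refine Subgroup.closure_induction ?_ ?_ ?_ ?_ hmK
    · rintro x ⟨j, rfl⟩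
      exact hτξ j
    · exact map_one τ
    · intro x y _ _ hx hy
      rw [map_mul, hx, hy]
    · intro x _ hx
      rw [map_inv, hx]
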